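/- Let H be an n×n real symmetric matrix, g ∈ ℝⁿ, f₀ ∈ ℝ and σ > 0, and let m(s) = f₀ + gᵀs + (1/2)sᵀHs + (σ/3)‖s‖³ be the cubic regularized model. If s* ∈ ℝⁿ is a global minimizer of m over ℝⁿ and the matrix H + σ‖s*‖I is positive definite, then s* is the unique global minimizer of m: every s ∈ ℝⁿ with m(s) = m(s*) satisfies s = s*. -/

import Mathlib

open Matrix

/-- difference vector, in plain pi-type land -/
def dvec {n : ℕ} (x y : Fin n → ℝ) : Fin n → ℝ := x - y

/-- gradient-like vector, in plain pi-type land -/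
def uvec {n : ℕ} (H : Matrix (Fin n) (Fin n) ℝ) (g y : Fin n → ℝ) (c : ℝ) : Fin n → ℝ :=
  g + H *ᵥ y + c • y

/-- trial point, in plain pi-type land -/
def ptv {n : ℕ} (y u : Fin n → ℝ) (t : ℝ) : Fin n → ℝ := y - t • u

lemma hsymHelp {n : ℕ} (H : Matrix (Fin n) (Fin n) ℝ) (hH : H.IsSymm) (x y : Fin n → ℝ) :
    x ⬝ᵥ H *ᵥ y = y ⬝ᵥ H *ᵥ x := by
  rw [dotProduct_mulVec, ← mulVec_transpose, hH.eq, dotProduct_comm]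

lemma aux1 {n : ℕ} (H : Matrix (Fin n) (Fin n) ℝ) (hH : H.IsSymm) (c : ℝ) (x y : Fin n → ℝ) :
    dvec x y ⬝ᵥ (H + c • (1 : Matrix (Fin n) (Fin n) ℝ)) *ᵥ dvec x y =
      x ⬝ᵥ H *ᵥ x - 2 * (x ⬝ᵥ H *ᵥ y) + y ⬝ᵥ H *ᵥ y
        + c * (x ⬝ᵥ x - 2 * (x ⬝ᵥ y) + y ⬝ᵥ y) := by
  simp only [dvec, add_mulVec, smul_mulVec, one_mulVec, mulVec_sub, sub_dotProduct,
    dotProduct_sub, dotProduct_add, dotProduct_smul, smul_eq_mul]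
  rw [hsymHelp H hH y x, dotProduct_comm y x]
  ring

lemma aux2 {n : ℕ} (H : Matrix (Fin n) (Fin n) ℝ) (c : ℝ) (g x y : Fin n → ℝ) :
    uvec H g y c ⬝ᵥ dvec x y =
      g ⬝ᵥ x - g ⬝ᵥ y + x ⬝ᵥ H *ᵥ y - y ⬝ᵥ H *ᵥ y + c * (x ⬝ᵥ y - y ⬝ᵥ y) := by
  simp only [uvec, dvec, add_dotProduct, smul_dotProduct, dotProduct_sub, smul_eq_mul]
  rw [dotProduct_comm (H *ᵥ y) x, dotProduct_comm (H *ᵥ y) y, dotProduct_comm y x]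
  ring

lemma aux3 {n : ℕ} (y u : Fin n → ℝ) (t : ℝ) : dvec (ptv y u t) y = (-t) • u := by
  funext i
  simp [dvec, ptv]

lemma dot_aux {n : ℕ} (v y u : Fin n → ℝ) (t : ℝ) :
    v ⬝ᵥ dvec (ptv y u t) y = -(t * (v ⬝ᵥ u)) := by
  rw [aux3]
  simp [dotProduct_smul]

lemma quad_aux {n : ℕ} (B : Matrix (Fin n) (Fin n) ℝ) (y u : Fin n → ℝ) (t : ℝ) :
    dvec (ptv y u t) y ⬝ᵥ B *ᵥ dvec (ptv y u t) y = t ^ 2 * (u ⬝ᵥ B *ᵥ u) := by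
  rw [aux3]
  simp only [smul_dotProduct, mulVec_smul, dotProduct_smul, smul_eq_mul]
  ring

set_option maxHeartbeats 1000000 in
theorem cubic_model_global_minimizer_unique
    (n : ℕ) (H : Matrix (Fin n) (Fin n) ℝ) (hH : H.IsSymm)
    (g : EuclideanSpace ℝ (Fin n)) (f₀ σ : ℝ) (hσ : 0 < σ)
    (m : EuclideanSpace ℝ (Fin n) → ℝ)
    (hm : ∀ s : EuclideanSpace ℝ (Fin n),
      m s = f₀ + g ⬝ᵥ s + (1 / 2) * (s ⬝ᵥ H.mulVec s) + (σ / 3) * ‖s‖ ^ 3)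
    (sstar : EuclideanSpace ℝ (Fin n))
    (hmin : ∀ s : EuclideanSpace ℝ (Fin n), m sstar ≤ m s)
    (hpd : (H + (σ * ‖sstar‖) • (1 : Matrix (Fin n) (Fin n) ℝ)).PosDef) :
    ∀ s : EuclideanSpace ℝ (Fin n), m s = m sstar → s = sstar := by
  have hnorm : ∀ x : EuclideanSpace ℝ (Fin n), x ⬝ᵥ x = ‖x‖ ^ 2 := by
    intro x
    rw [EuclideanSpace.norm_eq, Real.sq_sqrt (Finset.sum_nonneg (fun i _ => sq_nonneg _))]
    simp [dotProduct, sq]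
  -- the key scalar identity
  have key : ∀ s : EuclideanSpace ℝ (Fin n),
      m s - m sstar =
        (g ⬝ᵥ s - g ⬝ᵥ sstar + s ⬝ᵥ H *ᵥ sstar - sstar ⬝ᵥ H *ᵥ sstar
            + σ * ‖sstar‖ * (s ⬝ᵥ sstar - sstar ⬝ᵥ sstar))
        + (1 / 2) * (s ⬝ᵥ H *ᵥ s - 2 * (s ⬝ᵥ H *ᵥ sstar) + sstar ⬝ᵥ H *ᵥ sstar
            + σ * ‖sstar‖ * (s ⬝ᵥ s - 2 * (s ⬝ᵥ sstar) + sstar ⬝ᵥ sstar))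
        + σ / 6 * (2 * ‖s‖ ^ 3 - 3 * ‖sstar‖ * ‖s‖ ^ 2 + ‖sstar‖ ^ 3) := by
    intro s
    rw [hm s, hm sstar, hnorm s, hnorm sstar]
    ring
  obtain ⟨U, hU⟩ : ∃ U : Fin n → ℝ, U = uvec H g sstar (σ * ‖sstar‖) := ⟨_, rfl⟩
  obtain ⟨PU, hPU⟩ : ∃ PU : EuclideanSpace ℝ (Fin n), PU.ofLp = U := ⟨WithLp.toLp 2 U, rfl⟩
  have hUsq : U ⬝ᵥ U = ‖PU‖ ^ 2 := by rw [← hPU]; exact hnorm PU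
  have hU0' : 0 ≤ ‖PU‖ := norm_nonneg _
  have ha0 : 0 ≤ ‖sstar‖ := norm_nonneg _
  -- the gradient-like vector has nonpositive self-product
  have hUU : U ⬝ᵥ U ≤ 0 := by
    obtain ⟨C, hCdef⟩ : ∃ C : ℝ,
        C = (1 / 2) * |U ⬝ᵥ (H + (σ * ‖sstar‖) • (1 : Matrix (Fin n) (Fin n) ℝ)) *ᵥ U|
          + σ / 6 * ‖PU‖ ^ 2 * (3 * ‖sstar‖ + 2 * ‖PU‖) := ⟨_, rfl⟩
    have hstep : ∀ t : ℝ, 0 < t → t ≤ 1 → U ⬝ᵥ U ≤ t * C := by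
      intro t ht ht1
      obtain ⟨P, hP⟩ : ∃ P : EuclideanSpace ℝ (Fin n), P.ofLp = ptv sstar U t := ⟨WithLp.toLp 2 _, rfl⟩
      have h0 : 0 ≤ m P - m sstar := by have := hmin P; linarith
      rw [key P] at h0
      have e2 := aux2 H (σ * ‖sstar‖) g (ptv sstar U t) sstar
      rw [dot_aux, ← hU, ← hP] at e2
      have e1 := aux1 H hH (σ * ‖sstar‖) (ptv sstar U t) sstar
      rw [quad_aux, ← hP] at e1
      -- norm bound
      have hveq : P - sstar = (-t) • PU := by
        apply WithLp.ofLp_injective 2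
        rw [WithLp.ofLp_sub, WithLp.ofLp_smul, hP, hPU]
        exact aux3 sstar U t
      have hb : |‖P‖ - ‖sstar‖| ≤ t * ‖PU‖ := by
        have h1 := abs_norm_sub_norm_le P sstar
        rw [hveq, norm_smul] at h1
        simpa [abs_of_pos ht] using h1
      have hb0 : 0 ≤ ‖P‖ := norm_nonneg _
      -- cubic bound
      have hcub : 2 * ‖P‖ ^ 3 - 3 * ‖sstar‖ * ‖P‖ ^ 2 + ‖sstar‖ ^ 3
          ≤ t ^ 2 * ‖PU‖ ^ 2 * (3 * ‖sstar‖ + 2 * ‖PU‖) := by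
        have h1 : (‖P‖ - ‖sstar‖) ^ 2 ≤ (t * ‖PU‖) ^ 2 := by
          nlinarith [sq_abs (‖P‖ - ‖sstar‖), abs_nonneg (‖P‖ - ‖sstar‖), hb]
        have h2 : ‖P‖ ≤ ‖sstar‖ + t * ‖PU‖ := by
          have := abs_le.mp hb; linarith [this.2]
        have h3 : t * ‖PU‖ ≤ ‖PU‖ := by nlinarith
        have hfact : 2 * ‖P‖ ^ 3 - 3 * ‖sstar‖ * ‖P‖ ^ 2 + ‖sstar‖ ^ 3
            = (‖P‖ - ‖sstar‖) ^ 2 * (2 * ‖P‖ + ‖sstar‖) := by ring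
        rw [hfact]
        nlinarith [sq_nonneg (t * ‖PU‖)]
      have h4 : t ^ 2 / 2 * (U ⬝ᵥ (H + (σ * ‖sstar‖) • (1 : Matrix (Fin n) (Fin n) ℝ)) *ᵥ U)
          ≤ t ^ 2 / 2 * |U ⬝ᵥ (H + (σ * ‖sstar‖) • (1 : Matrix (Fin n) (Fin n) ℝ)) *ᵥ U| := by
        have := le_abs_self (U ⬝ᵥ (H + (σ * ‖sstar‖) • (1 : Matrix (Fin n) (Fin n) ℝ)) *ᵥ U)
        nlinarith [sq_nonneg t]
      have h5 : σ / 6 * (2 * ‖P‖ ^ 3 - 3 * ‖sstar‖ * ‖P‖ ^ 2 + ‖sstar‖ ^ 3)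
          ≤ σ / 6 * (t ^ 2 * ‖PU‖ ^ 2 * (3 * ‖sstar‖ + 2 * ‖PU‖)) := by
        have hσ6 : 0 ≤ σ / 6 := by positivity
        exact mul_le_mul_of_nonneg_left hcub hσ6
      have hgoal : 0 ≤ -(t * (U ⬝ᵥ U)) + t ^ 2 * C := by
        rw [hCdef]
        nlinarith [h0, e1, e2, h4, h5]
      have hmul : t * (U ⬝ᵥ U) ≤ t * (t * C) := by nlinarith [hgoal]
      exact le_of_mul_le_mul_left hmul ht
    have hC0 : 0 ≤ C := by
      rw [hCdef]
      positivity
    by_contra hcon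
    push_neg at hcon
    rcases eq_or_lt_of_le hC0 with hC | hC
    · have h1 := hstep 1 one_pos le_rfl
      rw [← hC, one_mul] at h1
      linarith
    · have ht₀pos : 0 < min 1 ((U ⬝ᵥ U) / (2 * C)) := lt_min one_pos (by positivity)
      have h := hstep _ ht₀pos (min_le_left _ _)
      have h2 : min 1 ((U ⬝ᵥ U) / (2 * C)) * C ≤ ((U ⬝ᵥ U) / (2 * C)) * C :=
        mul_le_mul_of_nonneg_right (min_le_right _ _) hC.le
      have h3 : ((U ⬝ᵥ U) / (2 * C)) * C = (U ⬝ᵥ U) / 2 := by field_simp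
      linarith
  -- hence the gradient-like vector vanishes
  have hUE0 : PU = 0 := by
    have h1 : ‖PU‖ ^ 2 ≤ 0 := by rw [← hUsq]; exact hUU
    have h2 : ‖PU‖ = 0 := by nlinarith
    exact norm_eq_zero.mp h2
  have hzero : ∀ v : Fin n → ℝ, uvec H g sstar (σ * ‖sstar‖) ⬝ᵥ v = 0 := by
    intro v
    rw [← hU, ← hPU, hUE0]
    show (0 : Fin n → ℝ) ⬝ᵥ v = 0
    exact zero_dotProduct v
  -- conclusion
  intro s hs
  by_contra hne
  have hw : dvec s sstar ≠ 0 := by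
    intro h0
    exact hne (WithLp.ofLp_injective 2 (sub_eq_zero.mp h0))
  have hQ := hpd.dotProduct_mulVec_pos hw
  rw [star_trivial] at hQ
  have e1 := aux1 H hH (σ * ‖sstar‖) s sstar
  have e2 := aux2 H (σ * ‖sstar‖) g s sstar
  rw [hzero (dvec s sstar)] at e2
  have hk := key s
  rw [hs, sub_self] at hk
  have hb0 : 0 ≤ ‖s‖ := norm_nonneg _
  have hcub : 0 ≤ σ / 6 * (2 * ‖s‖ ^ 3 - 3 * ‖sstar‖ * ‖s‖ ^ 2 + ‖sstar‖ ^ 3) := by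
    have hfact : 2 * ‖s‖ ^ 3 - 3 * ‖sstar‖ * ‖s‖ ^ 2 + ‖sstar‖ ^ 3
        = (‖s‖ - ‖sstar‖) ^ 2 * (2 * ‖s‖ + ‖sstar‖) := by ring
    rw [hfact]
    exact mul_nonneg (by positivity) (mul_nonneg (sq_nonneg _) (by linarith))
  linarith [hQ, e1, e2, hk, hcub]
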